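/- arXiv:2503.05121 — 2 statements merged into one kernel-verified Lean document; each statement's English description precedes it below -/
import Mathlib

section
/- Let $r\ge 3$ be an integer, $\varepsilon>0$ a sufficiently small constant, $\rho\ge 1$ a fixed integer, and set $d^*=\lceil\varepsilon^2\log n\rceil$ and $p_*=\log n/\binom{n-1}{r-1}$. Let $H_1,\dots,H_\rho$ be independent copies of $\vec H_{n,p'}$ where $p'=\frac{\varepsilon}{2r\rho}p_*$. Then there exists a constant $\varepsilon'=\varepsilon'(\varepsilon,r,\rho)>0$ such that, with probability tending to $1$ as $n\to\infty$, the number of vertices $v\in[n]$ whose out-degree is less than $d^*$ in at least one of $H_1,\dots,H_\rho$ is at most $n^{1-\varepsilon'}$. -/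
open MeasureTheory
open scoped Classical ENNReal

/-- An oriented edge of an `r`-uniform hypergraph on `Fin n`: an `r`-element subset of
`Fin n` together with a distinguished vertex (the tail) belonging to it. -/
abbrev OEdge (r n : ℕ) := {p : Fin n × Finset (Fin n) // p.2.card = r ∧ p.1 ∈ p.2}

/-- The Bernoulli measure on `Bool` with success probability `q`. -/
noncomputable def bern (q : ℝ≥0∞) : Measure Bool :=
  q • Measure.dirac true + (1 - q) • Measure.dirac false

/-- The out-degree of a vertex `v` in an oriented hypergraph (encoded by the indicator
function `f` of its set of oriented edges): the number of present oriented edges whose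
tail is `v`. -/
noncomputable def outDeg {r n : ℕ} (f : OEdge r n → Bool) (v : Fin n) : ℕ :=
  (Finset.univ.filter fun oe : OEdge r n => oe.1.1 = v ∧ f oe = true).card

lemma bern_apply (q : ℝ≥0∞) (s : Set Bool) :
    bern q s = (if true ∈ s then q else 0) + (if false ∈ s then 1 - q else 0) := by
  simp [bern, Measure.dirac_apply, Set.indicator_apply]

lemma bern_univ (q : ℝ≥0∞) (hq : q ≤ 1) : bern q Set.univ = 1 := by
  simp [bern_apply, add_tsub_cancel_of_le hq]

lemma bern_isProb (q : ℝ≥0∞) (hq : q ≤ 1) : IsProbabilityMeasure (bern q) :=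
  ⟨bern_univ q hq⟩

lemma bern_singleton (q : ℝ≥0∞) (b : Bool) :
    bern q {b} = if b then q else 1 - q := by
  cases b <;> simp [bern_apply]

lemma cylinder_measure {ι : Type*} [Fintype ι] (q : ℝ≥0∞) (hq : q ≤ 1)
    (T S : Finset ι) (hS : S ⊆ T) :
    Measure.pi (fun _ : ι => bern q)
      (Set.univ.pi fun e => if e ∈ T then ({decide (e ∈ S)} : Set Bool) else Set.univ)
      = q ^ S.card * (1 - q) ^ (T \ S).card := by
  haveI : ∀ _i : ι, IsProbabilityMeasure (bern q) := fun _ => bern_isProb q hq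
  rw [Measure.pi_pi]
  have h1 : ∀ e : ι, bern q (if e ∈ T then ({decide (e ∈ S)} : Set Bool) else Set.univ)
      = if e ∈ T then (if e ∈ S then q else 1 - q) else 1 := by
    intro e
    by_cases he : e ∈ T
    · simp [he, bern_singleton]
    · rw [if_neg he, if_neg he]; exact bern_univ q hq
  simp_rw [h1]
  rw [Finset.prod_ite_mem Finset.univ T, Finset.univ_inter, Finset.prod_ite, Finset.prod_const,
    Finset.prod_const, (Finset.filter_mem_eq_inter (s := T) (t := S)),
    Finset.inter_eq_right.mpr hS, Finset.sdiff_eq_filter]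

lemma vertex_bound {ι : Type*} [Fintype ι] (q : ℝ≥0∞) (hq : q ≤ 1)
    (T : Finset ι) (d : ℕ) :
    Measure.pi (fun _ : ι => bern q)
      {g : ι → Bool | (T.filter fun e => g e = true).card < d}
      ≤ 2 ^ (d - 1) * (q / 2 + (1 - q)) ^ T.card := by
  set ν := Measure.pi (fun _ : ι => bern q)
  set P := T.powerset.filter (fun S => S.card < d) with hP
  have hsub : {g : ι → Bool | (T.filter fun e => g e = true).card < d}
      ⊆ ⋃ S ∈ P, Set.univ.pi fun e => if e ∈ T then ({decide (e ∈ S)} : Set Bool) else Set.univ := by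
    intro g hg
    refine Set.mem_biUnion (show T.filter (fun e => g e = true) ∈ P by
      simp only [hP, Finset.mem_filter, Finset.mem_powerset]
      exact ⟨Finset.filter_subset _ _, hg⟩) ?_
    intro e _
    by_cases he : e ∈ T <;> simp [he]
  refine le_trans (measure_mono hsub) (le_trans (measure_biUnion_finset_le P _) ?_)
  have hEval : ∀ S ∈ P, ν (Set.univ.pi fun e =>
      if e ∈ T then ({decide (e ∈ S)} : Set Bool) else Set.univ)
      = q ^ S.card * (1 - q) ^ (T \ S).card := by
    intro S hS
    exact cylinder_measure q hq T S (Finset.mem_powerset.mp (Finset.mem_filter.mp hS).1)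
  rw [Finset.sum_congr rfl hEval]
  have hterm : ∀ S ∈ P, q ^ S.card * (1 - q) ^ (T \ S).card
      ≤ 2 ^ (d - 1) * ((q / 2) ^ S.card * (1 - q) ^ (T \ S).card) := by
    intro S hS
    have hcard : S.card ≤ d - 1 :=
      Nat.le_sub_one_of_lt (Finset.mem_filter.mp hS).2
    have hqeq : q ^ S.card = 2 ^ S.card * (q / 2) ^ S.card := by
      rw [← mul_pow, mul_comm, ENNReal.div_mul_cancel two_ne_zero ENNReal.ofNat_ne_top]
    rw [hqeq, mul_assoc]
    exact mul_le_mul_left (pow_le_pow_right₀ one_le_two hcard) _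
  refine le_trans (Finset.sum_le_sum hterm) ?_
  rw [← Finset.mul_sum]
  refine mul_le_mul_right ?_ _
  calc ∑ S ∈ P, (q / 2) ^ S.card * (1 - q) ^ (T \ S).card
      ≤ ∑ S ∈ T.powerset, (q / 2) ^ S.card * (1 - q) ^ (T \ S).card :=
        Finset.sum_le_sum_of_subset (Finset.filter_subset _ _)
    _ = (q / 2 + (1 - q)) ^ T.card := by
        rw [← Finset.prod_const, Finset.prod_add]
        exact Finset.sum_congr rfl fun S _ => by rw [Finset.prod_const, Finset.prod_const]

lemma eval_pi_measure {α : Type*} [MeasurableSpace α] (ν : Measure α)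
    [IsProbabilityMeasure ν] {k : ℕ} (i : Fin k) (A : Set α) :
    Measure.pi (fun _ : Fin k => ν) {f : Fin k → α | f i ∈ A} = ν A := by
  have hset : {f : Fin k → α | f i ∈ A}
      = Set.univ.pi (fun j => if j = i then A else Set.univ) := by
    ext f
    simp only [Set.mem_setOf_eq, Set.mem_pi, Set.mem_univ, forall_true_left]
    constructor
    · intro h j; by_cases hj : j = i <;> simp [hj, h]
    · intro h; have := h i; simpa using this
  rw [hset, Measure.pi_pi]
  have : ∀ j : Fin k, ν (if j = i then A else Set.univ) = if j = i then ν A else 1 := by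
    intro j; by_cases hj : j = i <;> simp [hj]
  simp_rw [this, Finset.prod_ite_eq' Finset.univ i (fun _ => ν A), Finset.mem_univ, if_pos]


lemma card_tail (r n : ℕ) (hr : 1 ≤ r) (v : Fin n) :
    (Finset.univ.filter fun oe : OEdge r n => oe.1.1 = v).card = (n - 1).choose (r - 1) := by
  have hcard : (Finset.univ.erase v).card = n - 1 := by
    rw [Finset.card_erase_of_mem (Finset.mem_univ v), Finset.card_univ, Fintype.card_fin]
  rw [← hcard, ← Finset.card_powersetCard]
  set s := Finset.univ.filter fun oe : OEdge r n => oe.1.1 = v with hs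
  set t := Finset.powersetCard (r - 1) (Finset.univ.erase v) with ht
  have hjp : ∀ E ∈ t, (insert v E).card = r ∧ v ∈ insert v E := by
    intro E hE
    have hE' := Finset.mem_powersetCard.mp hE
    have hv : v ∉ E := fun hv => (Finset.mem_erase.mp (hE'.1 hv)).1 rfl
    refine ⟨?_, Finset.mem_insert_self v E⟩
    rw [Finset.card_insert_of_notMem hv, hE'.2]
    omega
  refine Finset.card_bij' (fun oe _ => oe.1.2.erase v)
    (fun E hE => (⟨(v, insert v E), hjp E hE⟩ : OEdge r n)) ?_ ?_ ?_ ?_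
  · intro oe hoe
    have hv : oe.1.1 = v := (Finset.mem_filter.mp hoe).2
    rw [Finset.mem_powersetCard]
    constructor
    · intro x hx
      rw [Finset.mem_erase] at hx ⊢
      exact ⟨hx.1, Finset.mem_univ x⟩
    · rw [Finset.card_erase_of_mem (hv ▸ oe.2.2), oe.2.1]
  · intro E hE
    exact Finset.mem_filter.mpr ⟨Finset.mem_univ _, rfl⟩
  · intro oe hoe
    have hv : oe.1.1 = v := (Finset.mem_filter.mp hoe).2
    apply Subtype.ext
    apply Prod.ext
    · exact hv.symm
    · exact (Finset.insert_erase (hv ▸ oe.2.2))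
  · intro E hE
    have hE' := Finset.mem_powersetCard.mp hE
    have hv : v ∉ E := fun hv => (Finset.mem_erase.mp (hE'.1 hv)).1 rfl
    exact Finset.erase_insert hv

lemma outDeg_eq {r n : ℕ} (f : OEdge r n → Bool) (v : Fin n) :
    outDeg f v = ((Finset.univ.filter fun oe : OEdge r n => oe.1.1 = v).filter
      fun oe => f oe = true).card := by
  rw [outDeg, Finset.filter_filter]

lemma count_bound (r n ρ : ℕ) (hr : 1 ≤ r) (q : ℝ≥0∞) (hq : q ≤ 1) (d : ℕ) :
    ∫⁻ f, ((Finset.univ.filter fun v : Fin n =>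
        ∃ i : Fin ρ, outDeg (f i) v < d).card : ℝ≥0∞)
      ∂ (Measure.pi fun _ : Fin ρ => Measure.pi fun _ : OEdge r n => bern q)
      ≤ n * ρ * (2 ^ (d - 1) * (q / 2 + (1 - q)) ^ ((n - 1).choose (r - 1))) := by
  haveI : ∀ _i : OEdge r n, IsProbabilityMeasure (bern q) := fun _ => bern_isProb q hq
  set ν := Measure.pi fun _ : OEdge r n => bern q with hν
  set μ := Measure.pi fun _ : Fin ρ => ν with hμ
  set B := 2 ^ (d - 1) * (q / 2 + (1 - q)) ^ ((n - 1).choose (r - 1)) with hB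
  have hvert : ∀ v : Fin n, ν {g : OEdge r n → Bool | outDeg g v < d} ≤ B := by
    intro v
    have := vertex_bound q hq (Finset.univ.filter fun oe : OEdge r n => oe.1.1 = v) d
    rw [card_tail r n hr v] at this
    refine le_trans (le_of_eq ?_) this
    congr 1
    ext g
    simp only [Set.mem_setOf_eq, outDeg_eq]
  have hNv : ∀ v : Fin n, μ {f | ∃ i : Fin ρ, outDeg (f i) v < d} ≤ ρ * B := by
    intro v
    have hset : {f : Fin ρ → OEdge r n → Bool | ∃ i : Fin ρ, outDeg (f i) v < d}
        = ⋃ i : Fin ρ, {f | f i ∈ {g : OEdge r n → Bool | outDeg g v < d}} := by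
      ext f; simp [Set.mem_iUnion]
    rw [hset]
    refine le_trans (measure_iUnion_le _) ?_
    rw [tsum_fintype]
    calc ∑ i : Fin ρ, μ {f | f i ∈ {g : OEdge r n → Bool | outDeg g v < d}}
        = ∑ _i : Fin ρ, ν {g : OEdge r n → Bool | outDeg g v < d} := by
          refine Finset.sum_congr rfl fun i _ => ?_
          exact eval_pi_measure ν i _
      _ ≤ ∑ _i : Fin ρ, B := Finset.sum_le_sum fun i _ => hvert v
      _ = ρ * B := by rw [Finset.sum_const, Finset.card_univ, Fintype.card_fin, nsmul_eq_mul]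
  have hcast : ∀ f : Fin ρ → OEdge r n → Bool,
      ((Finset.univ.filter fun v : Fin n => ∃ i : Fin ρ, outDeg (f i) v < d).card : ℝ≥0∞)
      = ∑ v : Fin n, if ∃ i : Fin ρ, outDeg (f i) v < d then (1 : ℝ≥0∞) else 0 := by
    intro f
    rw [Finset.card_filter]
    push_cast
    exact Finset.sum_congr rfl fun v _ => by split_ifs <;> simp
  calc ∫⁻ f, ((Finset.univ.filter fun v : Fin n =>
        ∃ i : Fin ρ, outDeg (f i) v < d).card : ℝ≥0∞) ∂μ
      = ∑ v : Fin n, ∫⁻ f, (if ∃ i : Fin ρ, outDeg (f i) v < d then (1 : ℝ≥0∞) else 0) ∂μ := by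
        rw [← lintegral_finset_sum]
        · exact lintegral_congr fun f => hcast f
        · exact fun v _ => Measurable.of_discrete
    _ = ∑ v : Fin n, μ {f | ∃ i : Fin ρ, outDeg (f i) v < d} := by
        refine Finset.sum_congr rfl fun v _ => ?_
        have : (fun f : Fin ρ → OEdge r n → Bool =>
            if ∃ i : Fin ρ, outDeg (f i) v < d then (1 : ℝ≥0∞) else 0)
            = ({f : Fin ρ → OEdge r n → Bool | ∃ i : Fin ρ, outDeg (f i) v < d}).indicator 1 := by
          ext f; simp [Set.indicator_apply]
        rw [this, lintegral_indicator_one MeasurableSet.of_discrete]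
    _ ≤ ∑ _v : Fin n, (ρ : ℝ≥0∞) * B := Finset.sum_le_sum fun v _ => hNv v
    _ = n * ρ * B := by
        rw [Finset.sum_const, Finset.card_univ, Fintype.card_fin, nsmul_eq_mul, mul_assoc]


set_option maxHeartbeats 1000000 in
/-- Let `r ≥ 3`, let `ρ ≥ 1` be a fixed integer, and let `ε > 0` be a
sufficiently small constant.  Set `d* = ⌈ε² log n⌉` and `p* = log n / C(n-1, r-1)`, and
let `H_1, …, H_ρ` be independent copies of `⃗H_{n, p'}` with `p' = (ε/(2rρ)) p*`
(modelled by the product over `Fin ρ` of product Bernoulli measures on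
`OEdge r n → Bool`; the probability is truncated at `1`, which only affects finitely
many `n`).  Then there is a constant `ε' = ε'(ε,r,ρ) > 0` such that, with probability
tending to `1` as `n → ∞`, the number of vertices whose out-degree is less than `d*` in
at least one of `H_1, …, H_ρ` is at most `n^{1-ε'}`. -/
theorem stmt_5 (r : ℕ) (hr : 3 ≤ r) (ρ : ℕ) (hρ : 1 ≤ ρ) :
    ∃ ε₀ : ℝ, 0 < ε₀ ∧ ∀ ε : ℝ, 0 < ε → ε ≤ ε₀ →
      ∃ ε' : ℝ, 0 < ε' ∧
        Filter.Tendsto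
          (fun n : ℕ =>
            (Measure.pi (fun _ : Fin ρ => Measure.pi (fun _ : OEdge r n =>
                bern (ENNReal.ofReal
                  (min (ε / (2 * r * ρ) * (Real.log n / ((n - 1).choose (r - 1)))) 1)))))
              {f : Fin ρ → OEdge r n → Bool |
                ((Finset.univ.filter fun v : Fin n =>
                    ∃ i : Fin ρ, outDeg (f i) v < ⌈ε ^ 2 * Real.log n⌉₊).card : ℝ)
                  ≤ (n : ℝ) ^ ((1 : ℝ) - ε')})
          Filter.atTop (nhds 1) := by
  have hrR : (3:ℝ) ≤ (r:ℝ) := by exact_mod_cast hr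
  have hρR : (1:ℝ) ≤ (ρ:ℝ) := by exact_mod_cast hρ
  have hden : (0:ℝ) < 16 * r * ρ := by nlinarith
  have haden : (0:ℝ) < 2 * r * ρ := by nlinarith
  refine ⟨1 / (16 * r * ρ), by positivity, ?_⟩
  intro ε hε hεle
  set a : ℝ := ε / (2 * r * ρ) with ha
  have ha_pos : 0 < a := div_pos hε haden
  have hε1 : ε ≤ 1 := by
    refine hεle.trans ?_
    rw [div_le_one hden]; nlinarith
  have ha1 : a ≤ 1 := by
    rw [ha, div_le_one haden]; nlinarith
  refine ⟨ε / (16 * r * ρ), div_pos hε hden, ?_⟩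
  set ε' : ℝ := ε / (16 * r * ρ) with hε'
  have hε'a : ε' = a / 8 := by rw [hε', ha, div_div]; congr 1; ring
  have hεsq : ε ^ 2 ≤ a / 8 := by
    rw [ha]
    calc ε ^ 2 = ε * ε := sq ε
      _ ≤ ε * (1 / (16 * r * ρ)) := by
          exact mul_le_mul_of_nonneg_left hεle (le_of_lt hε)
      _ = ε / (2 * r * ρ) / 8 := by rw [div_div, mul_one_div]; congr 1; ring
  -- the lower bound function
  have h3 : Filter.Tendsto (fun n : ℕ => (ρ:ℝ) * (n:ℝ) ^ (-(a/4))) Filter.atTop (nhds 0) := by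
    have h1 : Filter.Tendsto (fun y : ℝ => y ^ (-(a/4))) Filter.atTop (nhds 0) :=
      tendsto_rpow_neg_atTop (by positivity)
    have h2 := (h1.comp tendsto_natCast_atTop_atTop).const_mul (ρ:ℝ)
    simpa using h2
  have h4 : Filter.Tendsto (fun n : ℕ => ENNReal.ofReal ((ρ:ℝ) * (n:ℝ) ^ (-(a/4))))
      Filter.atTop (nhds 0) := by
    have := (ENNReal.continuous_ofReal.tendsto 0).comp h3
    rw [ENNReal.ofReal_zero] at this; exact this
  have hlow : Filter.Tendsto (fun n : ℕ => 1 - ENNReal.ofReal ((ρ:ℝ) * (n:ℝ) ^ (-(a/4))))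
      Filter.atTop (nhds 1) := by
    have := ENNReal.Tendsto.sub (tendsto_const_nhds (x := (1:ℝ≥0∞))) h4
      (Or.inr (by simp : (0:ℝ≥0∞) ≠ ⊤))
    simpa using this
  -- eventual regime for the truncation
  have hfacpos : (0:ℝ) < (((r-1).factorial) : ℝ) := by exact_mod_cast Nat.factorial_pos (r-1)
  have hlogsmall : ∀ᶠ n : ℕ in Filter.atTop,
      ‖Real.log (n:ℝ)‖ ≤ (1/(2 * (((r-1).factorial) : ℝ))) * ‖(n:ℝ)‖ :=
    tendsto_natCast_atTop_atTop.eventually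
      (Asymptotics.IsLittleO.def Real.isLittleO_log_id_atTop (by positivity))
  have hE3 : ∀ᶠ n : ℕ in Filter.atTop,
      a * (Real.log n / ((n-1).choose (r-1) : ℝ)) ≤ 1 := by
    filter_upwards [hlogsmall, Filter.eventually_ge_atTop (2*r), Filter.eventually_ge_atTop 2]
      with n hlogn h2r h2
    have hrn : r ≤ n := by omega
    have hmpos : 0 < (n-1).choose (r-1) := Nat.choose_pos (by omega)
    have hmR : (0:ℝ) < ((n-1).choose (r-1) : ℝ) := by exact_mod_cast hmpos
    have hL0 : 0 ≤ Real.log n := Real.log_nonneg (by exact_mod_cast (by omega : 1 ≤ n))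
    have hch := Nat.pow_le_choose (r-1) (n-1) (α := ℝ)
    have hidx : n - 1 + 1 - (r - 1) = n - r + 1 := by omega
    rw [hidx] at hch
    have hb1 : (1:ℝ) ≤ ((n - r + 1 : ℕ) : ℝ) := by exact_mod_cast (by omega : 1 ≤ n - r + 1)
    have hpow : ((n - r + 1 : ℕ) : ℝ) ≤ ((n - r + 1 : ℕ) : ℝ) ^ (r-1) :=
      le_self_pow₀ hb1 (by omega)
    have hbcast : ((n - r + 1 : ℕ) : ℝ) = (n:ℝ) - r + 1 := by
      push_cast [Nat.cast_sub hrn]; ring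
    have hnr2 : (2:ℝ) * r ≤ (n:ℝ) := by exact_mod_cast h2r
    have hkey : Real.log n ≤ ((n-1).choose (r-1) : ℝ) := by
      have h5 : Real.log n ≤ (1/(2 * (((r-1).factorial) : ℝ))) * (n:ℝ) := by
        have hnn : ‖(n:ℝ)‖ = (n:ℝ) := Real.norm_of_nonneg (by positivity)
        have hln : ‖Real.log (n:ℝ)‖ = Real.log (n:ℝ) := Real.norm_of_nonneg hL0
        rw [hln, hnn] at hlogn; exact hlogn
      refine h5.trans ?_
      calc (1/(2 * (((r-1).factorial) : ℝ))) * (n:ℝ) = ((n:ℝ)/2) / (((r-1).factorial) : ℝ) := by ring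
        _ ≤ ((n - r + 1 : ℕ) : ℝ) / (((r-1).factorial) : ℝ) := by
            gcongr
            rw [hbcast]; linarith
        _ ≤ ((n - r + 1 : ℕ) : ℝ) ^ (r-1) / (((r-1).factorial) : ℝ) := by gcongr
        _ ≤ ((n-1).choose (r-1) : ℝ) := hch
    rw [← mul_div_assoc, div_le_one hmR]
    have : a * Real.log n ≤ 1 * Real.log n := by
      exact mul_le_mul_of_nonneg_right ha1 hL0
    linarith
  -- squeeze
  refine tendsto_of_tendsto_of_tendsto_of_le_of_le' hlow tendsto_const_nhds ?_ ?_
  · -- the main eventual lower bound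
    filter_upwards [hE3, Filter.eventually_ge_atTop 2, Filter.eventually_ge_atTop r]
      with n hx1' h2 hrn
    set L := Real.log n with hLdef
    set m := (n-1).choose (r-1) with hmdef
    set d := ⌈ε^2 * L⌉₊ with hddef
    set x := min (a * (L / (m:ℝ))) 1 with hxdef
    have hxeq : x = a * (L / m) := min_eq_left hx1'
    have hn1 : (1:ℝ) < n := by exact_mod_cast h2
    have hnpos : (0:ℝ) < n := by linarith
    have hLpos : 0 < L := Real.log_pos hn1
    have hmpos : 0 < m := Nat.choose_pos (by omega)
    have hmR : (0:ℝ) < (m:ℝ) := by exact_mod_cast hmpos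
    have hx0 : 0 ≤ x := by
      rw [hxeq]; positivity
    have hx1 : x ≤ 1 := min_le_right _ _
    set q := ENNReal.ofReal x with hqdef
    have hq : q ≤ 1 := ENNReal.ofReal_le_one.mpr hx1
    haveI hbp : ∀ _i : OEdge r n, IsProbabilityMeasure (bern q) := fun _ => bern_isProb q hq
    set ν := Measure.pi fun _ : OEdge r n => bern q with hνdef
    set μ := Measure.pi fun _ : Fin ρ => ν with hμdef
    haveI : IsProbabilityMeasure μ := by infer_instance
    set G := {f : Fin ρ → OEdge r n → Bool |
        ((Finset.univ.filter fun v : Fin n =>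
          ∃ i : Fin ρ, outDeg (f i) v < d).card : ℝ) ≤ (n : ℝ) ^ ((1 : ℝ) - ε')} with hGdef
    have hKpos : (0:ℝ) < (n:ℝ) ^ ((1:ℝ) - ε') := Real.rpow_pos_of_pos hnpos _
    have hd1 : 1 ≤ d := Nat.ceil_pos.mpr (by positivity)
    -- the complement bound
    have hGc : μ Gᶜ ≤ ENNReal.ofReal ((ρ:ℝ) * (n:ℝ) ^ (-(a/4))) := by
      have hsub : Gᶜ ⊆ {f : Fin ρ → OEdge r n → Bool |
          ENNReal.ofReal ((n:ℝ) ^ ((1:ℝ) - ε')) ≤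
            ((Finset.univ.filter fun v : Fin n =>
              ∃ i : Fin ρ, outDeg (f i) v < d).card : ℝ≥0∞)} := by
        intro f hf
        simp only [hGdef, Set.mem_compl_iff, Set.mem_setOf_eq, not_le] at hf
        simp only [Set.mem_setOf_eq]
        calc ENNReal.ofReal ((n:ℝ) ^ ((1:ℝ) - ε'))
            ≤ ENNReal.ofReal (((Finset.univ.filter fun v : Fin n =>
                ∃ i : Fin ρ, outDeg (f i) v < d).card : ℝ)) := ENNReal.ofReal_le_ofReal hf.le
          _ = _ := ENNReal.ofReal_natCast _
      refine le_trans (measure_mono hsub) ?_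
      refine le_trans (meas_ge_le_lintegral_div (Measurable.of_discrete).aemeasurable
        ((ENNReal.ofReal_pos.mpr hKpos).ne')
        ENNReal.ofReal_ne_top) ?_
      have hnum := count_bound r n ρ (by omega) q hq d
      refine le_trans (ENNReal.div_le_div_right hnum _) ?_
      -- now the analytic estimate
      have hsum : q / 2 + (1 - q) ≤ ENNReal.ofReal (Real.exp (-(x/2))) := by
        have e1 : q / 2 = ENNReal.ofReal (x/2) := by
          rw [ENNReal.ofReal_div_of_pos two_pos, ENNReal.ofReal_ofNat]
        have e2 : 1 - q = ENNReal.ofReal (1 - x) := by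
          rw [ENNReal.ofReal_sub _ hx0, ENNReal.ofReal_one]
        rw [e1, e2, ← ENNReal.ofReal_add (by positivity) (by linarith)]
        refine ENNReal.ofReal_le_ofReal ?_
        have := Real.add_one_le_exp (-(x/2))
        linarith
      have hpowB : (q/2 + (1-q))^m ≤ ENNReal.ofReal (Real.exp ((m:ℝ) * (-(x/2)))) := by
        calc (q/2 + (1-q))^m ≤ (ENNReal.ofReal (Real.exp (-(x/2))))^m :=
              pow_le_pow_left' hsum m
          _ = ENNReal.ofReal (Real.exp (-(x/2)) ^ m) :=
              (ENNReal.ofReal_pow (Real.exp_nonneg _) m).symm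
          _ = ENNReal.ofReal (Real.exp ((m:ℝ) * (-(x/2)))) := by rw [← Real.exp_nat_mul]
      have h2d : (2:ℝ≥0∞)^(d-1) = ENNReal.ofReal ((2:ℝ)^(d-1)) := by
        rw [ENNReal.ofReal_pow (by norm_num : (0:ℝ) ≤ 2)]
        norm_num
      have hNum2 : (n:ℝ≥0∞) * ρ * (2^(d-1) * (q/2 + (1-q))^m)
          ≤ ENNReal.ofReal ((n:ℝ) * (ρ:ℝ) * ((2:ℝ)^(d-1) * Real.exp ((m:ℝ) * (-(x/2))))) := by
        calc (n:ℝ≥0∞) * ρ * (2^(d-1) * (q/2 + (1-q))^m)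
            ≤ (n:ℝ≥0∞) * ρ * (2^(d-1) * ENNReal.ofReal (Real.exp ((m:ℝ) * (-(x/2))))) := by
              exact mul_le_mul_right (mul_le_mul_right hpowB _) _
          _ = ENNReal.ofReal ((n:ℝ) * (ρ:ℝ) * ((2:ℝ)^(d-1) * Real.exp ((m:ℝ) * (-(x/2))))) := by
              rw [h2d, ← ENNReal.ofReal_mul (by positivity), ← ENNReal.ofReal_natCast n,
                ← ENNReal.ofReal_natCast ρ, ← ENNReal.ofReal_mul (Nat.cast_nonneg n),
                ← ENNReal.ofReal_mul (by positivity)]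
      refine le_trans (ENNReal.div_le_div_right hNum2 _) ?_
      rw [← ENNReal.ofReal_div_of_pos hKpos]
      refine ENNReal.ofReal_le_ofReal ?_
      -- the purely real inequality
      have hmx : (m:ℝ) * (-(x/2)) = -(a*L)/2 := by
        rw [hxeq]; field_simp
      have hexp : Real.exp ((m:ℝ) * (-(x/2))) = (n:ℝ)^(-(a/2)) := by
        rw [hmx, Real.rpow_def_of_pos hnpos, ← hLdef]
        congr 1; ring
      have hdle : ((d-1:ℕ):ℝ) ≤ ε^2 * L := by
        have h1 := Nat.ceil_lt_add_one (by positivity : (0:ℝ) ≤ ε^2*L)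
        have h2' : ((d-1:ℕ):ℝ) = (d:ℝ) - 1 := by
          rw [Nat.cast_sub hd1]; norm_num
        rw [h2']
        rw [hddef]
        linarith
      have h2dle : (2:ℝ)^(d-1) ≤ (n:ℝ)^(ε^2) := by
        calc (2:ℝ)^(d-1) = Real.exp (Real.log 2 * ((d-1:ℕ):ℝ)) := by
              rw [← Real.rpow_natCast 2 (d-1), Real.rpow_def_of_pos two_pos]
          _ ≤ Real.exp (ε^2 * L) := by
              refine Real.exp_le_exp.mpr ?_
              have hlog2 : Real.log 2 ≤ 1 := by
                have := Real.log_le_sub_one_of_pos (by norm_num : (0:ℝ) < 2); linarith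
              have hml : Real.log 2 * ((d-1:ℕ):ℝ) ≤ 1 * (ε^2*L) :=
                mul_le_mul hlog2 hdle (Nat.cast_nonneg _) (by norm_num)
              linarith
          _ = (n:ℝ)^(ε^2) := by
              rw [Real.rpow_def_of_pos hnpos, ← hLdef]
              congr 1; ring
      rw [div_le_iff₀ hKpos, hexp]
      calc (n:ℝ) * (ρ:ℝ) * ((2:ℝ)^(d-1) * (n:ℝ)^(-(a/2)))
          ≤ (n:ℝ) * (ρ:ℝ) * ((n:ℝ)^(ε^2) * (n:ℝ)^(-(a/2))) := by
            have hr2 : (0:ℝ) ≤ (n:ℝ)^(-(a/2)) := le_of_lt (Real.rpow_pos_of_pos hnpos _)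
            exact mul_le_mul_of_nonneg_left
              (mul_le_mul_of_nonneg_right h2dle hr2) (by positivity)
        _ = (ρ:ℝ) * (n:ℝ)^((1:ℝ) + ε^2 + -(a/2)) := by
            rw [Real.rpow_add hnpos, Real.rpow_add hnpos, Real.rpow_one]; ring
        _ ≤ (ρ:ℝ) * (n:ℝ)^(-(a/4) + ((1:ℝ) - ε')) := by
            refine mul_le_mul_of_nonneg_left ?_ (by positivity)
            refine Real.rpow_le_rpow_of_exponent_le (le_of_lt hn1) ?_
            rw [hε'a]
            linarith [hεsq]
        _ = (ρ:ℝ) * (n:ℝ)^(-(a/4)) * (n:ℝ)^((1:ℝ) - ε') := by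
            rw [Real.rpow_add hnpos]; ring
    -- conclude
    rw [tsub_le_iff_right]
    calc (1:ℝ≥0∞) = μ Set.univ := measure_univ.symm
      _ = μ (G ∪ Gᶜ) := by rw [Set.union_compl_self]
      _ ≤ μ G + μ Gᶜ := measure_union_le _ _
      _ ≤ μ G + ENNReal.ofReal ((ρ:ℝ) * (n:ℝ) ^ (-(a/4))) := add_le_add_right hGc _
  · -- upper bound by 1
    refine Filter.Eventually.of_forall fun n => ?_
    haveI : ∀ _i : OEdge r n, IsProbabilityMeasure (bern (ENNReal.ofReal
        (min (ε / (2 * r * ρ) * (Real.log n / ((n - 1).choose (r - 1)))) 1))) :=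
      fun _ => bern_isProb _ (ENNReal.ofReal_le_one.mpr (min_le_right _ _))
    exact prob_le_one
end

section
/- Let $N,K,L$ be positive integers with $L\ge 2$ and let $0\le P\le 1/2$. Then the binomial distribution $\mathrm{Bin}(N,P)$ is stochastically dominated by $\mathrm{Bin}(LKN,P/K)$; that is, for every integer $k$, $\mathbb{P}(\mathrm{Bin}(N,P)\ge k)\le\mathbb{P}(\mathrm{Bin}(LKN,P/K)\ge k)$. -/
open Finset

noncomputable def binPMF (n : ℕ) (p : ℝ) (j : ℕ) : ℝ :=
  (n.choose j : ℝ) * p ^ j * (1 - p) ^ (n - j)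

lemma binPMF_nonneg {n : ℕ} {p : ℝ} (h0 : 0 ≤ p) (h1 : p ≤ 1) (j : ℕ) : 0 ≤ binPMF n p j := by
  have h2 : (0:ℝ) ≤ 1 - p := by linarith
  unfold binPMF
  positivity

lemma binPMF_eq_zero {n j : ℕ} {p : ℝ} (h : n < j) : binPMF n p j = 0 := by
  simp [binPMF, Nat.choose_eq_zero_of_lt h]

lemma binPMF_sum (n : ℕ) (p : ℝ) : ∑ j ∈ range (n+1), binPMF n p j = 1 := by
  have h := add_pow p (1-p) n
  simp only [add_sub_cancel, one_pow] at h
  calc ∑ j ∈ range (n+1), binPMF n p j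
      = ∑ j ∈ range (n+1), p ^ j * (1-p) ^ (n-j) * (n.choose j : ℝ) := by
        apply Finset.sum_congr rfl; intro j hj; simp [binPMF]; ring
    _ = 1 := h.symm

lemma cdf_le_one {n : ℕ} {p : ℝ} (h0 : 0 ≤ p) (h1 : p ≤ 1) (k : ℕ) :
    ∑ j ∈ range k, binPMF n p j ≤ 1 := by
  have hsub : ∑ j ∈ range (k + (n+1)), binPMF n p j = ∑ j ∈ range (n+1), binPMF n p j := by
    symm
    apply Finset.sum_subset
    · exact Finset.range_subset_range.2 (by omega)
    · intro x hx hx'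
      simp only [mem_range] at hx hx'
      exact binPMF_eq_zero (by omega)
  calc ∑ j ∈ range k, binPMF n p j
      ≤ ∑ j ∈ range (k + (n+1)), binPMF n p j := by
        apply Finset.sum_le_sum_of_subset_of_nonneg (Finset.range_subset_range.2 (by omega))
        intro i _ _; exact binPMF_nonneg h0 h1 i
    _ = 1 := by rw [hsub, binPMF_sum]

lemma cdf_eq_one {n : ℕ} {p : ℝ} {k : ℕ} (h : n < k) :
    ∑ j ∈ range k, binPMF n p j = 1 := by
  rw [← binPMF_sum n p]
  symm
  apply Finset.sum_subset
  · exact Finset.range_subset_range.2 (by omega)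
  · intro x hx hx'
    simp only [mem_range] at hx hx'
    exact binPMF_eq_zero (by omega)

lemma binPMF_conv (m n : ℕ) (p : ℝ) (j : ℕ) :
    binPMF (m + n) p j = ∑ i ∈ range (j+1), binPMF m p i * binPMF n p (j - i) := by
  unfold binPMF
  rw [Nat.add_choose_eq, Finset.Nat.sum_antidiagonal_eq_sum_range_succ_mk]
  push_cast
  rw [Finset.sum_mul, Finset.sum_mul]
  apply Finset.sum_congr rfl
  intro i hi
  simp only [mem_range] at hi
  by_cases him : i ≤ m
  · by_cases hjn : j - i ≤ n
    · have h1 : p ^ i * p ^ (j - i) = p ^ j := by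
        rw [← pow_add]; congr 1; omega
      have h2 : (1-p) ^ (m - i) * (1-p) ^ (n - (j - i)) = (1-p) ^ (m + n - j) := by
        rw [← pow_add]; congr 1; omega
      calc (m.choose i : ℝ) * (n.choose (j-i)) * p ^ j * (1-p)^(m+n-j)
          = ((m.choose i : ℝ) * p ^ i * (1-p)^(m-i)) * ((n.choose (j-i) : ℝ) * p^(j-i) * (1-p)^(n-(j-i))) := by
            rw [← h1, ← h2]; ring
      _ = _ := by ring
    · rw [Nat.choose_eq_zero_of_lt (show n < j - i by omega)]
      push_cast; ring
  · rw [Nat.choose_eq_zero_of_lt (show m < i by omega)]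
    push_cast; ring

lemma cdf_conv (m n : ℕ) (p : ℝ) (k : ℕ) :
    ∑ j ∈ range k, binPMF (m + n) p j
      = ∑ i ∈ range k, binPMF m p i * ∑ r ∈ range (k - i), binPMF n p r := by
  calc ∑ j ∈ range k, binPMF (m + n) p j
      = ∑ j ∈ Finset.Ico 0 k, ∑ i ∈ Finset.Ico 0 (j+1), binPMF m p i * binPMF n p (j-i) := by
        simp only [Nat.Ico_zero_eq_range]
        exact Finset.sum_congr rfl fun j _ => binPMF_conv m n p j
    _ = ∑ i ∈ Finset.Ico 0 k, ∑ j ∈ Finset.Ico i k, binPMF m p i * binPMF n p (j-i) := by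
        rw [Finset.sum_Ico_Ico_comm]
    _ = ∑ i ∈ range k, binPMF m p i * ∑ r ∈ range (k - i), binPMF n p r := by
        rw [Nat.Ico_zero_eq_range]
        apply Finset.sum_congr rfl
        intro i hi
        simp only [mem_range] at hi
        rw [Finset.mul_sum, Finset.sum_Ico_eq_sum_range]
        apply Finset.sum_congr rfl
        intro r hr
        congr 2
        omega

lemma abel_identity (a h : ℕ → ℝ) (k : ℕ) :
    ∑ i ∈ range k, a i * h i
      = h k * (∑ i ∈ range k, a i)
        + ∑ m ∈ range k, (h m - h (m+1)) * ∑ i ∈ range (m+1), a i := by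
  have tele : ∀ i, i < k → h i = h k + ∑ m ∈ Finset.Ico i k, (h m - h (m+1)) := by
    intro i hik
    rw [Finset.sum_Ico_eq_sum_range]
    have h2 := Finset.sum_range_sub' (fun r => h (i + r)) (k - i)
    simp only [← add_assoc] at h2
    rw [h2, show i + 0 = i from rfl, show i + (k - i) = k by omega]
    ring
  calc ∑ i ∈ range k, a i * h i
      = ∑ i ∈ range k, (a i * h k + ∑ m ∈ Finset.Ico i k, a i * (h m - h (m+1))) := by
        apply Finset.sum_congr rfl
        intro i hi
        simp only [mem_range] at hi
        rw [← Finset.mul_sum, ← mul_add, ← tele i hi]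
    _ = h k * (∑ i ∈ range k, a i)
        + ∑ i ∈ Finset.Ico 0 k, ∑ m ∈ Finset.Ico i k, a i * (h m - h (m+1)) := by
        rw [Finset.sum_add_distrib, ← Finset.sum_mul, Nat.Ico_zero_eq_range]
        ring
    _ = h k * (∑ i ∈ range k, a i)
        + ∑ m ∈ range k, (h m - h (m+1)) * ∑ i ∈ range (m+1), a i := by
        rw [Finset.sum_Ico_Ico_comm]
        congr 1
        simp only [Nat.Ico_zero_eq_range]
        apply Finset.sum_congr rfl
        intro m hm
        rw [Finset.mul_sum]
        exact Finset.sum_congr rfl fun i _ => by ring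

lemma abel_le (a b h : ℕ → ℝ) (k : ℕ)
    (hab : ∀ m, m ≤ k → ∑ i ∈ range m, a i ≤ ∑ i ∈ range m, b i)
    (hpos : ∀ i, 0 ≤ h i) (hmono : ∀ i, h (i+1) ≤ h i) :
    ∑ i ∈ range k, a i * h i ≤ ∑ i ∈ range k, b i * h i := by
  rw [abel_identity a h k, abel_identity b h k]
  apply add_le_add
  · exact mul_le_mul_of_nonneg_left (hab k le_rfl) (hpos k)
  · apply Finset.sum_le_sum
    intro m hm
    simp only [mem_range] at hm
    exact mul_le_mul_of_nonneg_left (hab (m+1) (by omega)) (by linarith [hmono m])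

/-- Dominance is preserved under convolution, stated at the CDF level. -/
lemma cdf_conv_mono (m m' n n' : ℕ) (p q : ℝ)
    (hp0 : 0 ≤ p) (hp1 : p ≤ 1) (hq0 : 0 ≤ q) (hq1 : q ≤ 1)
    (hF : ∀ j, ∑ i ∈ range j, binPMF m' q i ≤ ∑ i ∈ range j, binPMF m p i)
    (hF' : ∀ j, ∑ i ∈ range j, binPMF n' q i ≤ ∑ i ∈ range j, binPMF n p i)
    (k : ℕ) :
    ∑ j ∈ range k, binPMF (m' + n') q j ≤ ∑ j ∈ range k, binPMF (m + n) p j := by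
  rw [cdf_conv, cdf_conv]
  calc ∑ i ∈ range k, binPMF m' q i * ∑ r ∈ range (k - i), binPMF n' q r
      ≤ ∑ i ∈ range k, binPMF m' q i * ∑ r ∈ range (k - i), binPMF n p r := by
        apply Finset.sum_le_sum
        intro i _
        exact mul_le_mul_of_nonneg_left (hF' (k - i)) (binPMF_nonneg hq0 hq1 i)
    _ ≤ ∑ i ∈ range k, binPMF m p i * ∑ r ∈ range (k - i), binPMF n p r := by
        apply abel_le _ _ (fun i => ∑ r ∈ range (k - i), binPMF n p r) k
          (fun j _ => hF j)
        · intro i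
          exact Finset.sum_nonneg fun r _ => binPMF_nonneg hp0 hp1 r
        · intro i
          apply Finset.sum_le_sum_of_subset_of_nonneg (Finset.range_subset_range.2 (by omega))
          intro r _ _
          exact binPMF_nonneg hp0 hp1 r

lemma key_ineq (K L : ℕ) (hK : 0 < K) (hL : 2 ≤ L) (P : ℝ) (h0 : 0 ≤ P) (h1 : P ≤ 1/2) :
    (1 - P / K) ^ (L * K) ≤ 1 - P := by
  have hK1 : (1:ℝ) ≤ K := by exact_mod_cast hK
  have hK0 : (0:ℝ) < K := by linarith
  set a : ℝ := P / K with ha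
  have ha0 : 0 ≤ a := div_nonneg h0 (le_of_lt hK0)
  have haP : a ≤ P := by
    rw [ha, div_le_iff₀ hK0]
    nlinarith
  have ha1 : a ≤ 1/2 := le_trans haP h1
  have h1a0 : 0 ≤ 1 - a := by linarith
  have h1a1 : 1 - a ≤ 1 := by linarith
  have hKa : (K:ℝ) * a = P := by
    rw [ha]; field_simp
  have step2 : 1 + P ≤ (1 + a) ^ K := by
    have := one_add_mul_le_pow (a := a) (by linarith) K
    rwa [hKa] at this
  have hpow1 : (1 - a) ^ K * (1 + a) ^ K ≤ 1 := by
    rw [← mul_pow]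
    apply pow_le_one₀ (by nlinarith) (by nlinarith)
  set t : ℝ := (1 - a) ^ K with ht
  have ht0 : 0 ≤ t := pow_nonneg h1a0 K
  have ht1 : t ≤ 1 := pow_le_one₀ h1a0 h1a1
  have htP : t * (1 + P) ≤ 1 := by
    calc t * (1 + P) ≤ t * (1 + a) ^ K := by
          apply mul_le_mul_of_nonneg_left step2 ht0
      _ ≤ 1 := hpow1
  have hLK : (1 - a) ^ (L * K) = t ^ L := by
    rw [ht, ← pow_mul, mul_comm K L]
  rw [hLK]
  calc t ^ L ≤ t ^ 2 := pow_le_pow_of_le_one ht0 ht1 hL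
    _ ≤ 1 - P := by nlinarith

/-- The single-trial dominance: `Bin(LK, P/K)` dominates `Bin(1, P)` (CDFs compare). -/
lemma base_dom (K L : ℕ) (hK : 0 < K) (hL : 2 ≤ L) (P : ℝ) (h0 : 0 ≤ P) (h1 : P ≤ 1/2)
    (k : ℕ) :
    ∑ j ∈ range k, binPMF (L*K) (P/K) j ≤ ∑ j ∈ range k, binPMF 1 P j := by
  have hq0 : 0 ≤ P / K := div_nonneg h0 (by positivity)
  have hq1 : P / K ≤ 1 := by
    have hK1 : (1:ℝ) ≤ K := by exact_mod_cast hK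
    rw [div_le_one (by linarith)]; linarith
  match k with
  | 0 => simp
  | 1 =>
    simp only [Finset.range_one, Finset.sum_singleton]
    have hb : binPMF (L*K) (P/K) 0 = (1 - P/K) ^ (L*K) := by simp [binPMF]
    have hb1 : binPMF 1 P 0 = 1 - P := by simp [binPMF]
    rw [hb, hb1]
    exact key_ineq K L hK hL P h0 h1
  | (k+2) =>
    rw [cdf_eq_one (show 1 < k + 2 by omega)]
    exact cdf_le_one hq0 hq1 _

/-- The main dominance by induction on `n`. -/
lemma main_dom (K L : ℕ) (hK : 0 < K) (hL : 2 ≤ L) (P : ℝ) (h0 : 0 ≤ P) (h1 : P ≤ 1/2)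
    (n : ℕ) (k : ℕ) :
    ∑ j ∈ range k, binPMF (L*K*n) (P/K) j ≤ ∑ j ∈ range k, binPMF n P j := by
  have hP1 : P ≤ 1 := by linarith
  have hq0 : 0 ≤ P / K := div_nonneg h0 (by positivity)
  have hq1 : P / K ≤ 1 := by
    have hK1 : (1:ℝ) ≤ K := by exact_mod_cast hK
    rw [div_le_one (by linarith)]; linarith
  induction n generalizing k with
  | zero =>
    simp only [Nat.mul_zero]
    apply le_of_eq
    apply Finset.sum_congr rfl
    intro j _
    match j with
    | 0 => simp [binPMF]
    | (j+1) => simp [binPMF]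
  | succ n ih =>
    have e1 : n + 1 = n + 1 := rfl
    have e2 : L * K * (n + 1) = L * K * n + L * K := by ring
    rw [e2]
    exact cdf_conv_mono n (L*K*n) 1 (L*K) P (P/K) h0 hP1 hq0 hq1
      (fun j => ih j) (fun j => base_dom K L hK hL P h0 h1 j) k


/-- Let `N, K, L` be positive integers with `L ≥ 2` and let
`0 ≤ P ≤ 1/2`.  Then `Bin(N, P)` is stochastically dominated by `Bin(LKN, P/K)`:
for every integer `k ≥ 0`,
`ℙ(Bin(N,P) ≥ k) ≤ ℙ(Bin(LKN, P/K) ≥ k)`,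
where the upper tails are written out explicitly via the binomial distribution
`ℙ(Bin(n,p) = j) = C(n,j) p^j (1-p)^{n-j}`.  (For negative integers `k` both tails
equal `1`, so the case `k = 0` already covers them.) -/
theorem stmt_8 (N K L : ℕ) (hN : 0 < N) (hK : 0 < K) (hL : 2 ≤ L)
    (P : ℝ) (h0 : 0 ≤ P) (h1 : P ≤ 1 / 2) (k : ℕ) :
    ∑ j ∈ Finset.Ico k (N + 1), (N.choose j : ℝ) * P ^ j * (1 - P) ^ (N - j)
      ≤ ∑ j ∈ Finset.Ico k (L * K * N + 1),
          ((L * K * N).choose j : ℝ) * (P / K) ^ j * (1 - P / K) ^ (L * K * N - j) := by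
  have hP1 : P ≤ 1 := by linarith
  have hq0 : 0 ≤ P / K := div_nonneg h0 (by positivity)
  have hq1 : P / K ≤ 1 := by
    have hK1 : (1:ℝ) ≤ K := by exact_mod_cast hK
    rw [div_le_one (by linarith)]; linarith
  show ∑ j ∈ Finset.Ico k (N + 1), binPMF N P j
      ≤ ∑ j ∈ Finset.Ico k (L * K * N + 1), binPMF (L*K*N) (P/K) j
  by_cases hk : k ≤ N + 1
  · have hNle : N ≤ L * K * N := Nat.le_mul_of_pos_left N (by positivity)
    have hk' : k ≤ L * K * N + 1 := by omega
    rw [Finset.sum_Ico_eq_sub _ hk, Finset.sum_Ico_eq_sub _ hk']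
    rw [binPMF_sum, binPMF_sum]
    have := main_dom K L hK hL P h0 h1 N k
    linarith
  · rw [Finset.Ico_eq_empty (by omega), Finset.sum_empty]
    apply Finset.sum_nonneg
    intro j _
    exact binPMF_nonneg hq0 hq1 j
end
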